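/- arXiv:1412.5359 — 2 statements merged into one kernel-verified Lean document; each statement's English description precedes it below -/
import Mathlib

section
/- Let α > 1/2. There exists a constant C > 0 such that for all real numbers p ≠ 0, q, r, one has ∫_ℝ dx / ⟨p x² + q x + r⟩^α ≤ C / |p|^{1/2}, where ⟨y⟩ = √(1 + y²). (In particular the integral is finite and, for |p| ≥ 1, bounded by C/|p|^{1/2} ≤ C.) -/
open MeasureTheory Real

/-- The Japanese bracket `⟨y⟩ = √(1 + y²)`. -/
noncomputable def jb (y : ℝ) : ℝ := Real.sqrt (1 + y ^ 2)

lemma jb_eq_rpow (y : ℝ) : jb y = (1 + y ^ 2) ^ ((1:ℝ)/2) := by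
  rw [jb, Real.sqrt_eq_rpow]

lemma jb_rpow (α y : ℝ) : jb y ^ α = (1 + y ^ 2) ^ (α / 2) := by
  rw [jb_eq_rpow, ← Real.rpow_mul (by positivity)]
  ring_nf

lemma aux_pos (α y : ℝ) : 0 < (1 + y ^ 2) ^ α := Real.rpow_pos_of_pos (by positivity) _

/-- pointwise key bound -/
lemma key_pointwise (α : ℝ) (hα : 0 < α) (c u : ℝ) :
    1 / (1 + (u ^ 2 - c) ^ 2) ^ (α / 2) ≤
      (2:ℝ) ^ (α / 2) * (1 / (1 + (u - Real.sqrt (max c 0)) ^ 2) ^ α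
        + 1 / (1 + (u + Real.sqrt (max c 0)) ^ 2) ^ α) := by
  set s := Real.sqrt (max c 0) with hs
  have hs2 : s ^ 2 = max c 0 := Real.sq_sqrt (le_max_right _ _)
  set m2 := min ((u - s) ^ 2) ((u + s) ^ 2) with hm2
  have hm2nn : 0 ≤ m2 := le_min (sq_nonneg _) (sq_nonneg _)
  -- step 1 : (u²-s²)² ≤ (u²-c)²
  have h1 : (u ^ 2 - s ^ 2) ^ 2 ≤ (u ^ 2 - c) ^ 2 := by
    rcases le_or_gt c 0 with hc | hc
    · rw [hs2, max_eq_right hc]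
      nlinarith [sq_nonneg u]
    · rw [hs2, max_eq_left hc.le]
  -- step 2 : m2² ≤ (u²-c)²
  have h2 : m2 ^ 2 ≤ (u ^ 2 - c) ^ 2 := by
    have := mul_le_mul (min_le_left ((u - s) ^ 2) ((u + s) ^ 2))
      (min_le_right ((u - s) ^ 2) ((u + s) ^ 2)) hm2nn (sq_nonneg _)
    nlinarith
  -- step 3 : (1+m2)² ≤ 2(1+(u²-c)²)
  have h3 : (1 + m2) ^ 2 ≤ 2 * (1 + (u ^ 2 - c) ^ 2) := by
    nlinarith [sq_nonneg (m2 - 1)]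
  -- step 4 : (1+m2)^α ≤ 2^(α/2) * (1+(u²-c)²)^(α/2)
  have h4 : (1 + m2) ^ α ≤ 2 ^ (α / 2) * (1 + (u ^ 2 - c) ^ 2) ^ (α / 2) := by
    have := Real.rpow_le_rpow (by positivity) h3 (by positivity : (0:ℝ) ≤ α / 2)
    calc (1 + m2) ^ α = ((1 + m2) ^ 2) ^ (α / 2) := by
          rw [← Real.rpow_natCast (1 + m2) 2, ← Real.rpow_mul (by positivity)]
          congr 1
          push_cast
          ring
      _ ≤ (2 * (1 + (u ^ 2 - c) ^ 2)) ^ (α / 2) := this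
      _ = 2 ^ (α / 2) * (1 + (u ^ 2 - c) ^ 2) ^ (α / 2) :=
          Real.mul_rpow (by norm_num) (by positivity)
  have h5 : 1 / (1 + (u ^ 2 - c) ^ 2) ^ (α / 2) ≤ 2 ^ (α / 2) / (1 + m2) ^ α := by
    have hA : (0:ℝ) < (1 + (u ^ 2 - c) ^ 2) ^ (α / 2) := Real.rpow_pos_of_pos (by positivity) _
    have hB : (0:ℝ) < (1 + m2) ^ α := Real.rpow_pos_of_pos (by positivity) _
    rw [div_le_div_iff₀ hA hB, one_mul]
    exact h4
  refine h5.trans ?_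
  rw [mul_add]
  rcases min_choice ((u - s) ^ 2) ((u + s) ^ 2) with h | h
  · have : 2 ^ (α / 2) / (1 + m2) ^ α = 2 ^ (α/2) * (1 / (1 + (u - s) ^ 2) ^ α) := by
      rw [hm2, h]; ring
    rw [this]
    have : 0 ≤ (2:ℝ) ^ (α/2) * (1 / (1 + (u + s) ^ 2) ^ α) := by positivity
    linarith
  · have : 2 ^ (α / 2) / (1 + m2) ^ α = 2 ^ (α/2) * (1 / (1 + (u + s) ^ 2) ^ α) := by
      rw [hm2, h]; ring
    rw [this]
    have : 0 ≤ (2:ℝ) ^ (α/2) * (1 / (1 + (u - s) ^ 2) ^ α) := by positivity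
    linarith

lemma cont_aux (α : ℝ) : Continuous (fun u : ℝ => 1 / (1 + u ^ 2) ^ α) := by
  apply continuous_const.div
  · exact (continuous_const.add (continuous_id.pow 2)).rpow_const
      (fun x => Or.inl (by positivity : (1:ℝ) + x ^ 2 ≠ 0))
  · intro x; exact (aux_pos α x).ne'

lemma integrable_aux (α : ℝ) (hα : 1 / 2 < α) :
    Integrable (fun u : ℝ => 1 / (1 + u ^ 2) ^ α) := by
  have h0 : Integrable (fun u : ℝ => ((1:ℝ) + ‖u‖) ^ (-(2 * α))) :=
    integrable_one_add_norm (by simp [Module.finrank_self]; linarith)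
  refine (h0.const_mul ((2:ℝ) ^ α)).mono' ((cont_aux α).aestronglyMeasurable) ?_
  filter_upwards with u
  have h1 : (1 + ‖u‖) ^ (2 * α) ≤ 2 ^ α * (1 + u ^ 2) ^ α := by
    have hb : (1 + ‖u‖) ^ 2 ≤ 2 * (1 + u ^ 2) := by
      have : ‖u‖ = |u| := rfl
      nlinarith [sq_nonneg (|u| - 1), sq_abs u, abs_nonneg u]
    calc (1 + ‖u‖) ^ (2 * α) = ((1 + ‖u‖) ^ (2:ℕ)) ^ α := by
          rw [← Real.rpow_natCast (1 + ‖u‖) 2, ← Real.rpow_mul (by positivity)]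
          norm_num
      _ ≤ (2 * (1 + u ^ 2)) ^ α := by
          apply Real.rpow_le_rpow (by positivity) (by push_cast; exact hb) (by linarith)
      _ = 2 ^ α * (1 + u ^ 2) ^ α := Real.mul_rpow (by norm_num) (by positivity)
  have hp1 : (0:ℝ) < (1 + ‖u‖) ^ (2 * α) := Real.rpow_pos_of_pos (by positivity) _
  have hA : (0:ℝ) < (1 + u ^ 2) ^ α := Real.rpow_pos_of_pos (by positivity) _
  rw [Real.norm_eq_abs, abs_of_nonneg (by positivity)]
  rw [Real.rpow_neg (by positivity), ← one_div, mul_one_div, div_le_div_iff₀ hA hp1, one_mul]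
  exact h1

/-- integral bound for fixed c -/
lemma main_c (α : ℝ) (hα : 1 / 2 < α) (c : ℝ) :
    ∫ u : ℝ, 1 / (1 + (u ^ 2 - c) ^ 2) ^ (α / 2) ≤
      (2:ℝ) ^ (α / 2) * (2 * ∫ u : ℝ, 1 / (1 + u ^ 2) ^ α) := by
  set s := Real.sqrt (max c 0) with hs
  have hαpos : (0:ℝ) < α := by linarith
  have hI := integrable_aux α hα
  have hI1 : Integrable (fun u : ℝ => 1 / (1 + (u - s) ^ 2) ^ α) := hI.comp_sub_right s
  have hI2 : Integrable (fun u : ℝ => 1 / (1 + (u + s) ^ 2) ^ α) := by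
    have := hI.comp_sub_right (-s)
    simpa using this
  have hmaj : Integrable (fun u : ℝ =>
      (2:ℝ) ^ (α / 2) * (1 / (1 + (u - s) ^ 2) ^ α + 1 / (1 + (u + s) ^ 2) ^ α)) :=
    (hI1.add hI2).const_mul _
  have hcont : Continuous (fun u : ℝ => 1 / (1 + (u ^ 2 - c) ^ 2) ^ (α / 2)) := by
    apply continuous_const.div
    · exact (continuous_const.add (((continuous_id.pow 2).sub continuous_const).pow 2)).rpow_const
        (fun x => Or.inl (by positivity : (1:ℝ) + (x ^ 2 - c) ^ 2 ≠ 0))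
    · intro x; exact (aux_pos _ _).ne'
  have hfint : Integrable (fun u : ℝ => 1 / (1 + (u ^ 2 - c) ^ 2) ^ (α / 2)) := by
    refine hmaj.mono' hcont.aestronglyMeasurable ?_
    filter_upwards with u
    rw [Real.norm_eq_abs, abs_of_nonneg (by positivity)]
    exact key_pointwise α hαpos c u
  calc ∫ u : ℝ, 1 / (1 + (u ^ 2 - c) ^ 2) ^ (α / 2)
      ≤ ∫ u : ℝ, (2:ℝ) ^ (α / 2) * (1 / (1 + (u - s) ^ 2) ^ α + 1 / (1 + (u + s) ^ 2) ^ α) :=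
        integral_mono hfint hmaj (fun u => key_pointwise α hαpos c u)
    _ = (2:ℝ) ^ (α / 2) * ((∫ u : ℝ, 1 / (1 + (u - s) ^ 2) ^ α)
        + ∫ u : ℝ, 1 / (1 + (u + s) ^ 2) ^ α) := by
        rw [MeasureTheory.integral_const_mul, integral_add hI1 hI2]
    _ = (2:ℝ) ^ (α / 2) * (2 * ∫ u : ℝ, 1 / (1 + u ^ 2) ^ α) := by
        rw [integral_sub_right_eq_self (fun u : ℝ => 1 / (1 + u ^ 2) ^ α) s]
        rw [integral_add_right_eq_self (fun u : ℝ => 1 / (1 + u ^ 2) ^ α) s]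
        ring

set_option maxHeartbeats 1000000 in
/-- For `α > 1/2` there is `C > 0` with
`∫ dx / ⟨p x² + q x + r⟩^α ≤ C / |p|^(1/2)` for all `p ≠ 0`, `q`, `r`. -/
theorem stmt_2 (α : ℝ) (hα : α > 1 / 2) :
    ∃ C > 0, ∀ p q r : ℝ, p ≠ 0 →
      ∫ x : ℝ, 1 / jb (p * x ^ 2 + q * x + r) ^ α ≤ C / |p| ^ ((1 : ℝ) / 2) := by
  set I := ∫ u : ℝ, 1 / (1 + u ^ 2) ^ α with hI
  have hInn : 0 ≤ I := integral_nonneg (fun u => by positivity)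
  set C0 : ℝ := (2:ℝ) ^ (α / 2) * (2 * I) with hC0
  have hC0nn : 0 ≤ C0 := by positivity
  refine ⟨C0 + 1, by positivity, fun p q r hp => ?_⟩
  set b : ℝ := Real.sqrt |p| with hb
  have hpabs : 0 < |p| := abs_pos.mpr hp
  have hbpos : 0 < b := Real.sqrt_pos.mpr hpabs
  have hb2 : b ^ 2 = |p| := Real.sq_sqrt hpabs.le
  -- step 1: translate
  have step1 : ∫ x : ℝ, 1 / jb (p * x ^ 2 + q * x + r) ^ α
      = ∫ t : ℝ, 1 / jb (p * t ^ 2 + (r - q ^ 2 / (4 * p))) ^ α := by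
    rw [← integral_add_right_eq_self
      (fun t : ℝ => 1 / jb (p * t ^ 2 + (r - q ^ 2 / (4 * p))) ^ α) (q / (2 * p))]
    congr 1; funext x
    congr 3
    field_simp
    ring
  -- step 2: express as F (b * t) with F u = 1/(1+(u²-c')²)^(α/2)
  obtain ⟨c', hc'⟩ : ∃ c', ∀ t : ℝ,
      1 / jb (p * t ^ 2 + (r - q ^ 2 / (4 * p))) ^ α
        = 1 / (1 + ((b * t) ^ 2 - c') ^ 2) ^ (α / 2) := by
    rcases hp.lt_or_gt with hneg | hpos
    · refine ⟨r - q ^ 2 / (4 * p), fun t => ?_⟩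
      rw [jb_rpow]
      congr 3
      have : (b * t) ^ 2 = |p| * t ^ 2 := by rw [mul_pow, hb2]
      rw [this, abs_of_neg hneg]
      ring
    · refine ⟨-(r - q ^ 2 / (4 * p)), fun t => ?_⟩
      rw [jb_rpow]
      congr 3
      have : (b * t) ^ 2 = |p| * t ^ 2 := by rw [mul_pow, hb2]
      rw [this, abs_of_pos hpos]
      ring
  have step2 : ∫ t : ℝ, 1 / jb (p * t ^ 2 + (r - q ^ 2 / (4 * p))) ^ α
      = |b⁻¹| • ∫ u : ℝ, 1 / (1 + (u ^ 2 - c') ^ 2) ^ (α / 2) := by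
    simp_rw [hc']
    exact Measure.integral_comp_mul_left (fun u => 1 / (1 + (u ^ 2 - c') ^ 2) ^ (α / 2)) b
  rw [step1, step2]
  have hmain := main_c α hα c'
  have hrw : |p| ^ ((1:ℝ) / 2) = b := (Real.sqrt_eq_rpow |p|).symm
  rw [smul_eq_mul, abs_of_pos (inv_pos.mpr hbpos), hrw]
  have hfin : b⁻¹ * (∫ u : ℝ, 1 / (1 + (u ^ 2 - c') ^ 2) ^ (α / 2)) ≤ b⁻¹ * (C0 + 1) :=
    mul_le_mul_of_nonneg_left (by linarith [hmain]) (inv_nonneg.mpr hbpos.le)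
  calc b⁻¹ * (∫ u : ℝ, 1 / (1 + (u ^ 2 - c') ^ 2) ^ (α / 2)) ≤ b⁻¹ * (C0 + 1) := hfin
    _ = (C0 + 1) / b := by rw [div_eq_mul_inv, mul_comm]
end

section
/- For each N ∈ ℕ define subsets of ℝ²: A_N = {(τ₁,ξ₁) : |ξ₁ - N| < N^{-1}, |τ₁ - ξ₁²| < 6}, B_N = {(τ₂,ξ₂) : |ξ₂| < (2N)^{-1}, |τ₂ + ξ₂²| < 1}, R_N = {(τ,ξ) : |ξ - N| < (2N)^{-1}, |τ + ξ² - 2ξN| < 1}. Then for all N ≥ 1, R_N - B_N ⊆ A_N. -/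
open Pointwise

/-- For `N ≥ 1`, the inclusion `R_N - B_N ⊆ A_N` for the rectangles in `ℝ²`
used in the counterexample showing failure of the bilinear estimate (2.8)
for `s' ≥ s + 1/2`. -/
theorem stmt_19 (N : ℕ) (hN : 1 ≤ N) :
    {p : ℝ × ℝ | |p.2 - (N : ℝ)| < 1 / (2 * N) ∧
        |p.1 + p.2 ^ 2 - 2 * p.2 * N| < 1} -
      {p : ℝ × ℝ | |p.2| < 1 / (2 * N) ∧ |p.1 + p.2 ^ 2| < 1} ⊆
    {p : ℝ × ℝ | |p.2 - (N : ℝ)| < 1 / N ∧ |p.1 - p.2 ^ 2| < 6} := by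
  rintro p hp
  rw [Set.mem_sub] at hp
  obtain ⟨r, ⟨hr1, hr2⟩, b, ⟨hb1, hb2⟩, rfl⟩ := hp
  have hN1 : (1:ℝ) ≤ N := by exact_mod_cast hN
  have hNpos : (0:ℝ) < N := by linarith
  rw [abs_lt] at hr1 hr2 hb1 hb2
  obtain ⟨hr1a, hr1b⟩ := hr1
  obtain ⟨hr2a, hr2b⟩ := hr2
  obtain ⟨hb1a, hb1b⟩ := hb1
  obtain ⟨hb2a, hb2b⟩ := hb2
  have h2N : (0:ℝ) < 2 * N := by linarith
  have hhalf : 1 / (2 * (N:ℝ)) ≤ 1 / 2 := by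
    rw [div_le_div_iff₀ h2N (by norm_num)]; nlinarith
  have hinv : 1 / (2 * (N:ℝ)) + 1 / (2 * (N:ℝ)) = 1 / N := by
    field_simp; norm_num
  constructor
  · simp only [Prod.snd_sub, Set.mem_setOf_eq]
    rw [abs_lt]
    constructor <;> linarith
  · simp only [Prod.fst_sub, Prod.snd_sub, Set.mem_setOf_eq]
    rw [abs_lt]
    have hx : |r.2| ≤ N + 1/2 := by
      rw [abs_le]; constructor <;> nlinarith
    have hd : |(N:ℝ) - r.2 + b.2| ≤ 1 / N := by
      rw [abs_le]; constructor <;> linarith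
    have key : |2 * r.2 * ((N:ℝ) - r.2 + b.2)| ≤ 2 * (N + 1/2) * (1/N) := by
      rw [abs_mul, abs_mul]
      have : |(2:ℝ)| = 2 := by norm_num
      rw [this]
      have h0 : (0:ℝ) ≤ |r.2| := abs_nonneg _
      nlinarith [abs_nonneg ((N:ℝ) - r.2 + b.2)]
    have hbound : 2 * ((N:ℝ) + 1/2) * (1/N) ≤ 3 := by
      have h1N : 1 / (N:ℝ) ≤ 1 := by
        rw [div_le_one hNpos]; linarith
      have hmul : (N:ℝ) * (1/N) = 1 := by field_simp
      nlinarith [hmul, h1N]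
    rw [abs_le] at key
    have hid : (r.1 - b.1) - (r.2 - b.2)^2 =
        (r.1 + r.2^2 - 2*r.2*N) - (b.1 + b.2^2) + 2*r.2*((N:ℝ) - r.2 + b.2) := by
      ring
    rw [hid]
    constructor <;> linarith [key.1, key.2]
end
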